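/- Let (α₊, β₊) ∈ D and (α₋, β₋) ∈ D satisfy J(α₊, β₊, α₋, β₋) = 0 and ρ₊ ≠ ρ₋, where (ρ±, w±) := (ρ̂(α±,β±), ŵ(α±,β±)); set V := (ρ₊w₊ − ρ₋w₋)/(ρ₊ − ρ₋) and η₊ := η(ρ₊). Then the partial derivatives of J in its first two arguments at this point are ∂J/∂α₊ = −((ρ₊ − ρ₋)·ρ₊/(2·η₊))·(c_out(α₊,β₊) − V)² and ∂J/∂β₊ = −((ρ₊ − ρ₋)·ρ₊/(2·η₊))·(V − c_in(α₊,β₊))². In particular ∂J/∂α₊ ≠ 0 whenever V ≠ c_out(α₊,β₊), and ∂J/∂β₊ ≠ 0 whenever V ≠ c_in(α₊,β₊). -/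

import Mathlib

/-- At a point `(α₊,β₊,α₋,β₋)` of the zero set of the jump function `J`
with `ρ₊ ≠ ρ₋`, and with shock speed `V = [ρw]/[ρ]`, the partial derivatives of `J` in its
first two arguments are
`∂J/∂α₊ = −((ρ₊−ρ₋)·ρ₊/(2η₊))·(c_out(α₊,β₊) − V)²` and
`∂J/∂β₊ = −((ρ₊−ρ₋)·ρ₊/(2η₊))·(V − c_in(α₊,β₊))²`; in particular they are nonzero when
`V ≠ c_out(α₊,β₊)` resp. `V ≠ c_in(α₊,β₊)`. -/
theorem jump_function_partial_derivatives
    (p F : ℝ → ℝ) (D : Set (ℝ × ℝ)) (ρhat what : ℝ × ℝ → ℝ)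
    (hp : ContDiffOn ℝ (⊤ : ℕ∞) p (Set.Ioi 0))
    (hp' : ∀ s ∈ Set.Ioi (0 : ℝ), 0 < deriv p s)
    (hF : ∀ s ∈ Set.Ioi (0 : ℝ), HasDerivAt F (Real.sqrt (deriv p s) / s) s)
    (hD : IsOpen D)
    (hρ : ContDiffOn ℝ (⊤ : ℕ∞) ρhat D) (hw : ContDiffOn ℝ (⊤ : ℕ∞) what D)
    (hρpos : ∀ q ∈ D, 0 < ρhat q)
    (hplus : ∀ q ∈ D, F (ρhat q) + what q = q.1)
    (hminus : ∀ q ∈ D, F (ρhat q) - what q = q.2)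
    (J : ℝ × ℝ → ℝ × ℝ → ℝ)
    (hJ : ∀ qp qm, J qp qm =
      (ρhat qp * what qp - ρhat qm * what qm) ^ 2 -
        ((ρhat qp * what qp ^ 2 + p (ρhat qp)) - (ρhat qm * what qm ^ 2 + p (ρhat qm))) *
          (ρhat qp - ρhat qm))
    (qp qm : ℝ × ℝ) (hqp : qp ∈ D) (hqm : qm ∈ D)
    (hJ0 : J qp qm = 0) (hne : ρhat qp ≠ ρhat qm) :
    (deriv (fun s => J (s, qp.2) qm) qp.1 =
        -((ρhat qp - ρhat qm) * ρhat qp / (2 * Real.sqrt (deriv p (ρhat qp)))) *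
          ((what qp + Real.sqrt (deriv p (ρhat qp))) -
            (ρhat qp * what qp - ρhat qm * what qm) / (ρhat qp - ρhat qm)) ^ 2) ∧
    (deriv (fun s => J (qp.1, s) qm) qp.2 =
        -((ρhat qp - ρhat qm) * ρhat qp / (2 * Real.sqrt (deriv p (ρhat qp)))) *
          ((ρhat qp * what qp - ρhat qm * what qm) / (ρhat qp - ρhat qm) -
            (what qp - Real.sqrt (deriv p (ρhat qp)))) ^ 2) ∧
    ((ρhat qp * what qp - ρhat qm * what qm) / (ρhat qp - ρhat qm) ≠
        what qp + Real.sqrt (deriv p (ρhat qp)) →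
      deriv (fun s => J (s, qp.2) qm) qp.1 ≠ 0) ∧
    ((ρhat qp * what qp - ρhat qm * what qm) / (ρhat qp - ρhat qm) ≠
        what qp - Real.sqrt (deriv p (ρhat qp)) →
      deriv (fun s => J (qp.1, s) qm) qp.2 ≠ 0) := by
  have hρp : 0 < ρhat qp := hρpos qp hqp
  have hP : 0 < deriv p (ρhat qp) := hp' _ hρp
  set η := Real.sqrt (deriv p (ρhat qp)) with hηdef
  have hηpos : 0 < η := Real.sqrt_pos.mpr hP
  have hηne : η ≠ 0 := ne_of_gt hηpos
  have hη2 : η ^ 2 = deriv p (ρhat qp) := Real.sq_sqrt hP.le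
  have hane : ρhat qp - ρhat qm ≠ 0 := sub_ne_zero.mpr hne
  have hρdiff : DifferentiableAt ℝ ρhat qp :=
    ((hρ.differentiableOn (by norm_num)).differentiableAt (hD.mem_nhds hqp))
  have hwformula : ∀ q ∈ D, what q = (q.1 - q.2) / 2 := by
    intro q hq; have h1 := hplus q hq; have h2 := hminus q hq; linarith
  have hFformula : ∀ q ∈ D, F (ρhat q) = (q.1 + q.2) / 2 := by
    intro q hq; have h1 := hplus q hq; have h2 := hminus q hq; linarith
  have hFρ : HasDerivAt F (η / ρhat qp) (ρhat qp) := hF (ρhat qp) hρp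
  have hppt : HasDerivAt p (deriv p (ρhat qp)) (ρhat qp) :=
    ((hp.differentiableOn (by norm_num)).differentiableAt
      (isOpen_Ioi.mem_nhds hρp)).hasDerivAt
  -- zero-set hypothesis, explicit
  have hJ0' : (ρhat qp * what qp - ρhat qm * what qm) ^ 2 -
      ((ρhat qp * what qp ^ 2 + p (ρhat qp)) - (ρhat qm * what qm ^ 2 + p (ρhat qm))) *
        (ρhat qp - ρhat qm) = 0 := by rw [← hJ]; exact hJ0
  have hK : (ρhat qp * what qp ^ 2 + p (ρhat qp)) - (ρhat qm * what qm ^ 2 + p (ρhat qm)) =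
      (ρhat qp * what qp - ρhat qm * what qm) ^ 2 / (ρhat qp - ρhat qm) := by
    field_simp; linarith [hJ0']
  ------------------------------------------------------------------
  -- Direction 1 : s ↦ (s, qp.2)
  ------------------------------------------------------------------
  have hline1 : HasDerivAt (fun s : ℝ => (s, qp.2)) ((1 : ℝ), (0 : ℝ)) qp.1 :=
    (hasDerivAt_id qp.1).prodMk (hasDerivAt_const qp.1 qp.2)
  have hg1 : HasDerivAt (fun s => ρhat (s, qp.2)) (fderiv ℝ ρhat qp ((1:ℝ),(0:ℝ))) qp.1 := by
    have := hρdiff.hasFDerivAt.comp_hasDerivAt qp.1 (by simpa using hline1)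
    exact this
  have htend1 : Filter.Tendsto (fun s : ℝ => (s, qp.2)) (nhds qp.1) (nhds qp) := by
    have : ContinuousAt (fun s : ℝ => (s, qp.2)) qp.1 :=
      (continuous_id.prodMk continuous_const).continuousAt
    simpa using this.tendsto
  have hmem1 : ∀ᶠ s in nhds qp.1, (s, qp.2) ∈ D := htend1.eventually_mem (hD.mem_nhds hqp)
  have hw1 : HasDerivAt (fun s => what (s, qp.2)) (1/2 : ℝ) qp.1 := by
    have hlin : HasDerivAt (fun s : ℝ => (s - qp.2) / 2) (1/2 : ℝ) qp.1 := by
      simpa using ((hasDerivAt_id qp.1).sub_const qp.2).div_const 2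
    refine hlin.congr_of_eventuallyEq ?_
    filter_upwards [hmem1] with s hs
    simpa using hwformula (s, qp.2) hs
  have hFlin1 : HasDerivAt (fun s => F (ρhat (s, qp.2))) (1/2 : ℝ) qp.1 := by
    have hlin : HasDerivAt (fun s : ℝ => (s + qp.2) / 2) (1/2 : ℝ) qp.1 := by
      simpa using ((hasDerivAt_id qp.1).add_const qp.2).div_const 2
    refine hlin.congr_of_eventuallyEq ?_
    filter_upwards [hmem1] with s hs
    simpa using hFformula (s, qp.2) hs
  have hρ1 : HasDerivAt (fun s => ρhat (s, qp.2)) (ρhat qp / (2 * η)) qp.1 := by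
    have huniq := (hFρ.comp qp.1 hg1).unique hFlin1
    have hd1 : fderiv ℝ ρhat qp ((1:ℝ),(0:ℝ)) = ρhat qp / (2 * η) := by
      field_simp at huniq ⊢; linarith
    exact hd1 ▸ hg1
  have hpρ1 : HasDerivAt (fun s => p (ρhat (s, qp.2)))
      (deriv p (ρhat qp) * (ρhat qp / (2 * η))) qp.1 := hppt.comp qp.1 hρ1
  have hmul1 : HasDerivAt (fun s => ρhat (s, qp.2) * what (s, qp.2))
      (ρhat qp / (2 * η) * what qp + ρhat qp * (1/2)) qp.1 := hρ1.mul hw1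
  have hT1 : HasDerivAt (fun s => J (s, qp.2) qm)
      (-((ρhat qp - ρhat qm) * ρhat qp / (2 * η)) *
        ((what qp + η) -
          (ρhat qp * what qp - ρhat qm * what qm) / (ρhat qp - ρhat qm)) ^ 2) qp.1 := by
    have h := ((hmul1.sub_const (ρhat qm * what qm)).pow 2).sub
      ((((hρ1.mul (hw1.pow 2)).add hpρ1).sub_const (ρhat qm * what qm ^ 2 + p (ρhat qm))).mul
        (hρ1.sub_const (ρhat qm)))
    have heq : (fun s => J (s, qp.2) qm) = fun s =>
        (ρhat (s, qp.2) * what (s, qp.2) - ρhat qm * what qm) ^ 2 -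
          ((ρhat (s, qp.2) * what (s, qp.2) ^ 2 + p (ρhat (s, qp.2))) -
            (ρhat qm * what qm ^ 2 + p (ρhat qm))) * (ρhat (s, qp.2) - ρhat qm) :=
      funext fun s => hJ _ _
    rw [heq]
    refine h.congr_deriv ?_
    simp only [Pi.mul_apply, Pi.add_apply, Pi.pow_apply, Prod.mk.eta]
    rw [← hη2, hK]
    push_cast
    field_simp
    ring
  ------------------------------------------------------------------
  -- Direction 2 : s ↦ (qp.1, s)
  ------------------------------------------------------------------
  have hline2 : HasDerivAt (fun s : ℝ => (qp.1, s)) ((0 : ℝ), (1 : ℝ)) qp.2 :=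
    (hasDerivAt_const qp.2 qp.1).prodMk (hasDerivAt_id qp.2)
  have hg2 : HasDerivAt (fun s => ρhat (qp.1, s)) (fderiv ℝ ρhat qp ((0:ℝ),(1:ℝ))) qp.2 := by
    have := hρdiff.hasFDerivAt.comp_hasDerivAt qp.2 (by simpa using hline2)
    exact this
  have htend2 : Filter.Tendsto (fun s : ℝ => (qp.1, s)) (nhds qp.2) (nhds qp) := by
    have : ContinuousAt (fun s : ℝ => (qp.1, s)) qp.2 :=
      (continuous_const.prodMk continuous_id).continuousAt
    simpa using this.tendsto
  have hmem2 : ∀ᶠ s in nhds qp.2, (qp.1, s) ∈ D := htend2.eventually_mem (hD.mem_nhds hqp)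
  have hw2 : HasDerivAt (fun s => what (qp.1, s)) (-(1/2) : ℝ) qp.2 := by
    have hlin : HasDerivAt (fun s : ℝ => (qp.1 - s) / 2) (-(1/2) : ℝ) qp.2 := by
      have h0 := ((hasDerivAt_id qp.2).const_sub qp.1).div_const 2; norm_num at h0 ⊢; exact h0
    refine hlin.congr_of_eventuallyEq ?_
    filter_upwards [hmem2] with s hs
    simpa using hwformula (qp.1, s) hs
  have hFlin2 : HasDerivAt (fun s => F (ρhat (qp.1, s))) (1/2 : ℝ) qp.2 := by
    have hlin : HasDerivAt (fun s : ℝ => (qp.1 + s) / 2) (1/2 : ℝ) qp.2 := by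
      simpa using ((hasDerivAt_id qp.2).const_add qp.1).div_const 2
    refine hlin.congr_of_eventuallyEq ?_
    filter_upwards [hmem2] with s hs
    simpa using hFformula (qp.1, s) hs
  have hρ2 : HasDerivAt (fun s => ρhat (qp.1, s)) (ρhat qp / (2 * η)) qp.2 := by
    have huniq := (hFρ.comp qp.2 hg2).unique hFlin2
    have hd2 : fderiv ℝ ρhat qp ((0:ℝ),(1:ℝ)) = ρhat qp / (2 * η) := by
      field_simp at huniq ⊢; linarith
    exact hd2 ▸ hg2
  have hpρ2 : HasDerivAt (fun s => p (ρhat (qp.1, s)))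
      (deriv p (ρhat qp) * (ρhat qp / (2 * η))) qp.2 := hppt.comp qp.2 hρ2
  have hmul2 : HasDerivAt (fun s => ρhat (qp.1, s) * what (qp.1, s))
      (ρhat qp / (2 * η) * what qp + ρhat qp * (-(1/2))) qp.2 := hρ2.mul hw2
  have hT2 : HasDerivAt (fun s => J (qp.1, s) qm)
      (-((ρhat qp - ρhat qm) * ρhat qp / (2 * η)) *
        ((ρhat qp * what qp - ρhat qm * what qm) / (ρhat qp - ρhat qm) -
          (what qp - η)) ^ 2) qp.2 := by
    have h := ((hmul2.sub_const (ρhat qm * what qm)).pow 2).sub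
      ((((hρ2.mul (hw2.pow 2)).add hpρ2).sub_const (ρhat qm * what qm ^ 2 + p (ρhat qm))).mul
        (hρ2.sub_const (ρhat qm)))
    have heq : (fun s => J (qp.1, s) qm) = fun s =>
        (ρhat (qp.1, s) * what (qp.1, s) - ρhat qm * what qm) ^ 2 -
          ((ρhat (qp.1, s) * what (qp.1, s) ^ 2 + p (ρhat (qp.1, s))) -
            (ρhat qm * what qm ^ 2 + p (ρhat qm))) * (ρhat (qp.1, s) - ρhat qm) :=
      funext fun s => hJ _ _
    rw [heq]
    refine h.congr_deriv ?_
    simp only [Pi.mul_apply, Pi.add_apply, Pi.pow_apply, Prod.mk.eta]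
    rw [← hη2, hK]
    push_cast
    field_simp
    ring
  refine ⟨hT1.deriv, hT2.deriv, ?_, ?_⟩
  · intro hV
    rw [hT1.deriv]
    refine mul_ne_zero ?_ (pow_ne_zero 2 (sub_ne_zero.mpr (Ne.symm hV)))
    exact neg_ne_zero.mpr (div_ne_zero (mul_ne_zero hane (ne_of_gt hρp))
      (by positivity))
  · intro hV
    rw [hT2.deriv]
    refine mul_ne_zero ?_ (pow_ne_zero 2 (sub_ne_zero.mpr hV))
    exact neg_ne_zero.mpr (div_ne_zero (mul_ne_zero hane (ne_of_gt hρp))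
      (by positivity))
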